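/- Suppose a tensor T = Σ_{i=δ}^{ε} x^i ⊗ g_i with g_δ ≠ 0, g_ε ≠ 0, g_i polynomials, satisfies the recursions g_{ε-1} = 2x·g_ε, g_{ε-i} = 2x·g_{ε-i+1} − x²·g_{ε-i+2} for 2 ≤ i ≤ ε−δ, and 2x·g_δ = x²·g_{δ+1} in k[x]. Then ε − δ + 2 = 0 in k; in particular if char(k) = 0 or char(k) > ε − δ + 2, no such tensor exists. -/
import Mathlib


open Polynomial

/-!
STATEMENT 5: suppose the polynomials `g δ, …, g ε` (with `g i = 0` for `i` outside `[δ,ε]`,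
`g δ ≠ 0`, `g ε ≠ 0`), which are the second tensor factors of a tensor
`T = ∑_{i=δ}^{ε} x^i ⊗ g i`, satisfy the recursions
`g (ε-1) = 2x g ε`, `g (ε-i) = 2x g (ε-i+1) - x² g (ε-i+2)` for `2 ≤ i ≤ ε-δ`, and
`2x g δ = x² g (δ+1)`.  Then `ε - δ + 2 = 0` in `k`; in particular if `char k = 0` or
`char k > ε - δ + 2` no such family exists.
-/
theorem stmt5 (k : Type) [Field k] (δ ε : ℕ) (hδε : δ ≤ ε) (g : ℕ → k[X])
    (hout : ∀ i, (i < δ ∨ ε < i) → g i = 0)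
    (hδ0 : g δ ≠ 0) (hε0 : g ε ≠ 0)
    (h1 : δ < ε → g (ε - 1) = 2 * X * g ε)
    (h2 : ∀ i, 2 ≤ i → i ≤ ε - δ → g (ε - i) = 2 * X * g (ε - i + 1) - X ^ 2 * g (ε - i + 2))
    (h3 : 2 * X * g δ = X ^ 2 * g (δ + 1)) :
    ((ε - δ + 2 : ℕ) : k) = 0 ∧
      ∀ p : ℕ, CharP k p → (p = 0 ∨ ε - δ + 2 < p) → False := by
  have key : ∀ i, i ≤ ε - δ → g (ε - i) = ((i + 1 : ℕ) : k[X]) * X ^ i * g ε := by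
    intro i
    induction i using Nat.strong_induction_on with
    | _ i ih =>
      intro hi
      obtain _ | _ | j := i
      · simp
      · have hlt : δ < ε := by omega
        rw [h1 hlt]; push_cast; ring
      · have e1 : ε - (j + 2) + 1 = ε - (j + 1) := by omega
        have e2 : ε - (j + 2) + 2 = ε - j := by omega
        rw [h2 (j + 2) (by omega) hi, e1, e2,
          ih (j + 1) (by omega) (by omega), ih j (by omega) (by omega)]
        push_cast; ring
  have main : ((ε - δ + 2 : ℕ) : k) = 0 := by
    rcases Nat.eq_zero_or_pos (ε - δ) with hm | hm
    · have hg1 : g (δ + 1) = 0 := hout _ (Or.inr (by omega))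
      rw [hg1, mul_zero] at h3
      rcases mul_eq_zero.mp h3 with h | h
      · rcases mul_eq_zero.mp h with h | h
        · have h2k : (2 : k) = 0 := by
            simpa using congrArg (fun q => Polynomial.coeff q 0) h
          rw [hm]; push_cast; exact h2k
        · exact absurd h X_ne_zero
      · exact absurd h hδ0
    · obtain ⟨j, hj⟩ : ∃ j, ε - δ = j + 1 := ⟨ε - δ - 1, by omega⟩
      have hgδ : g δ = ((j + 2 : ℕ) : k[X]) * X ^ (j + 1) * g ε := by
        have := key (j + 1) (by omega)
        rwa [show ε - (j + 1) = δ by omega] at this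
      have hgδ1 : g (δ + 1) = ((j + 1 : ℕ) : k[X]) * X ^ j * g ε := by
        have := key j (by omega)
        rwa [show ε - j = δ + 1 by omega] at this
      have h3' : ((j + 3 : ℕ) : k[X]) * X ^ (j + 2) * g ε = 0 := by
        rw [hgδ, hgδ1] at h3
        push_cast at h3 ⊢
        linear_combination h3
      rcases mul_eq_zero.mp h3' with h | h
      · rcases mul_eq_zero.mp h with h | h
        · rw [← map_natCast (C : k →+* k[X]), C_eq_zero] at h
          rw [show ε - δ + 2 = j + 3 by omega]
          exact h
        · exact absurd h (pow_ne_zero _ X_ne_zero)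
      · exact absurd h hε0
  refine ⟨main, fun p hp hor => ?_⟩
  have hd : p ∣ ε - δ + 2 := (CharP.cast_eq_zero_iff k p _).mp main
  rcases hor with rfl | hlt
  · have := zero_dvd_iff.mp hd; omega
  · have := Nat.le_of_dvd (by omega) hd; omega
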